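/- Let A = kQ̃/I_{Q̃} for Q̃ ∈ Q̃_{n−1} and suppose char k ≠ 3. Then A is isomorphic to the Jacobian algebra of the quiver with potential (Q̃, W̃), where W̃ is the sum of the cube of the unique loop and all oriented 3-cycles of Q̃. -/

import Mathlib

open scoped Classical

/-- A finite quiver on the vertex set `Fin m`. -/
structure QuiverData (m : ℕ) where
  E : Type
  fintypeE : Fintype E
  decE : DecidableEq E
  s : E → Fin m
  t : E → Fin m

attribute [instance] QuiverData.fintypeE QuiverData.decE

namespace QuiverData

variable {m : ℕ} (Q : QuiverData m)

def IsLoop (e : Q.E) : Prop := Q.s e = Q.t e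

/-- adjacency in the underlying graph -/
def Adj (i j : Fin m) : Prop :=
  i ≠ j ∧ ∃ e, (Q.s e = i ∧ Q.t e = j) ∨ (Q.s e = j ∧ Q.t e = i)

def neighbours (i : Fin m) : Set (Fin m) := {j | Q.Adj i j}

/-- the underlying simple graph -/
def graph : SimpleGraph (Fin m) where
  Adj := Q.Adj
  symm := by
    constructor
    intro i j h
    exact ⟨Ne.symm h.1, by obtain ⟨e, he⟩ := h.2; exact ⟨e, he.symm⟩⟩
  loopless := by constructor; intro i h; exact h.1 rfl

/-- `(e, f, g)` is an oriented 3-cycle (with three distinct vertices) -/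
def CycTriple (e f g : Q.E) : Prop :=
  Q.t e = Q.s f ∧ Q.t f = Q.s g ∧ Q.t g = Q.s e ∧
  Q.s e ≠ Q.s f ∧ Q.s f ≠ Q.s g ∧ Q.s g ≠ Q.s e

def OnThreeCycle (e : Q.E) : Prop := ∃ f g, Q.CycTriple e f g

/-- the number of (oriented) 3-cycles of `Q` -/
noncomputable def tcount : ℕ :=
  {p : Q.E × Q.E × Q.E | Q.CycTriple p.1 p.2.1 p.2.2}.ncard / 3

/-- membership in the class `Q̃_{m}` of quivers of endomorphism algebras of
maximal rigid objects (Vatne's description), with loop `φ` at the vertex `c`: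
all non-trivial minimal cycles of the underlying graph are oriented 3-cycles
(in particular no multiple arrows or 2-cycles); every vertex has at most four
neighbours; a vertex with four neighbours has its adjacent arrows split between
two 3-cycles; a vertex with three neighbours has two adjacent arrows on a
3-cycle and one on none; there is exactly one loop, at a vertex `c` with at
most one neighbour, or with two neighbours and traversed by a 3-cycle. -/
structure IsTilde (Q : QuiverData m) (c : Fin m) (φ : Q.E) : Prop where
  loop_s : Q.s φ = c
  loop_t : Q.t φ = c
  loop_unique : ∀ e, Q.IsLoop e → e = φ
  no_mult : ∀ e f, Q.s e = Q.s f → Q.t e = Q.t f → e = f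
  no_two_cycle : ∀ e f, Q.s e = Q.t f → Q.t e = Q.s f → Q.IsLoop e
  cycles_length_three : ∀ (v : Fin m) (W : Q.graph.Walk v v), W.IsCycle → W.length = 3
  cycles_oriented : ∀ i j l : Fin m, Q.Adj i j → Q.Adj j l → Q.Adj l i →
    ∃ e f g, Q.CycTriple e f g ∧ ({Q.s e, Q.s f, Q.s g} : Set (Fin m)) = {i, j, l}
  card_neighbours : ∀ i, (Q.neighbours i).ncard ≤ 4
  four_neighbours : ∀ i, (Q.neighbours i).ncard = 4 →
    ∀ e, (Q.s e = i ∨ Q.t e = i) → ¬ Q.IsLoop e → Q.OnThreeCycle e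
  three_neighbours : ∀ i, (Q.neighbours i).ncard = 3 →
    ∃ e, (Q.s e = i ∨ Q.t e = i) ∧ ¬ Q.IsLoop e ∧ ¬ Q.OnThreeCycle e ∧
      ∀ f, (Q.s f = i ∨ Q.t f = i) → ¬ Q.IsLoop f → f ≠ e → Q.OnThreeCycle f
  loop_vertex : (Q.neighbours c).ncard ≤ 1 ∨
    ((Q.neighbours c).ncard = 2 ∧ ∃ e f g, Q.CycTriple e f g ∧ Q.s e = c)

/-- `e` and `f` are consecutive arrows forming a relation: `f ∘ e` with
either `e = f` the loop, or `e, f` consecutive on a 3-cycle -/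
def Bad (e f : Q.E) : Prop :=
  (Q.IsLoop e ∧ e = f) ∨ ∃ g, Q.CycTriple e f g

/-- `l` is the list of arrows of a path from `i` to `j` which is nonzero in the
quotient algebra (no relation-subpath) -/
def GoodPath (i j : Fin m) (l : List Q.E) : Prop :=
  l.Chain' (fun e f => Q.t e = Q.s f ∧ ¬ Q.Bad e f) ∧
  (l.head?.elim (i = j) (fun e => Q.s e = i)) ∧
  (l.getLast?.elim (i = j) (fun e => Q.t e = j))

/-- the Cartan matrix of the algebra `kQ/I_Q`: the `(i,j)` entry is the number
of nonzero paths from `i` to `j` -/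
noncomputable def cartan : Matrix (Fin m) (Fin m) ℤ :=
  fun i j => ({l : List Q.E | Q.GoodPath i j l}.ncard : ℤ)

end QuiverData

open FreeAlgebra

/-- generators of the path algebra: vertex idempotents and arrows -/
inductive PGen {m : ℕ} (Q : QuiverData m) : Type
  | v : Fin m → PGen Q
  | a : Q.E → PGen Q

/-- the defining relations of the algebra `kQ/I_Q`, with the relations `φ²` and
all length-2 subpaths of oriented 3-cycles.  (Products are written in
composition order: the path "`e` then `f`" is `ι (a f) * ι (a e)`.) -/
inductive PathRel (k : Type) [Field k] {m : ℕ} (Q : QuiverData m) :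
    FreeAlgebra k (PGen Q) → FreeAlgebra k (PGen Q) → Prop
  | vertex_mul (i j : Fin m) :
      PathRel k Q (ι k (PGen.v (Q := Q) i) * ι k (PGen.v j))
        (if i = j then ι k (PGen.v (Q := Q) i) else 0)
  | vertex_sum : PathRel k Q (∑ i : Fin m, ι k (PGen.v (Q := Q) i)) 1
  | target_arrow (e : Q.E) :
      PathRel k Q (ι k (PGen.v (Q.t e)) * ι k (PGen.a e)) (ι k (PGen.a e))
  | arrow_source (e : Q.E) :
      PathRel k Q (ι k (PGen.a e) * ι k (PGen.v (Q.s e))) (ι k (PGen.a e))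
  | rel_zero (e f : Q.E) (h : Q.Bad e f) :
      PathRel k Q (ι k (PGen.a f) * ι k (PGen.a e)) 0

/-- the algebra `kQ/I_Q` -/
def PathAlg (k : Type) [Field k] {m : ℕ} (Q : QuiverData m) : Type :=
  RingQuot (PathRel k Q)

noncomputable instance (k : Type) [Field k] {m : ℕ} (Q : QuiverData m) :
    Ring (PathAlg k Q) := by unfold PathAlg; infer_instance

noncomputable instance (k : Type) [Field k] {m : ℕ} (Q : QuiverData m) :
    Algebra k (PathAlg k Q) := by unfold PathAlg; infer_instance

/-- the cyclic derivative `∂_e W̃` of the potential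
`W̃ = φ³ + (sum of all oriented 3-cycles)` with respect to the arrow `e`:
`3φ²` if `e = φ` is the loop, plus, for each 3-cycle `(e, f, g)` through `e`,
the complementary path `g ∘ f`. -/
noncomputable def cycDer (k : Type) [Field k] {m : ℕ} (Q : QuiverData m)
    (e : Q.E) : FreeAlgebra k (PGen Q) :=
  (if Q.IsLoop e then (3 : k) • (ι k (PGen.a e) * ι k (PGen.a e)) else 0) +
    ∑ p ∈ Finset.univ.filter (fun p : Q.E × Q.E => Q.CycTriple e p.1 p.2),
      ι k (PGen.a p.2) * ι k (PGen.a p.1)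

/-- the defining relations of the Jacobian algebra of `(Q̃, W̃)`: the path
algebra relations together with the vanishing of all cyclic derivatives of the
potential `W̃`. -/
inductive JacRel (k : Type) [Field k] {m : ℕ} (Q : QuiverData m) :
    FreeAlgebra k (PGen Q) → FreeAlgebra k (PGen Q) → Prop
  | vertex_mul (i j : Fin m) :
      JacRel k Q (ι k (PGen.v (Q := Q) i) * ι k (PGen.v j))
        (if i = j then ι k (PGen.v (Q := Q) i) else 0)
  | vertex_sum : JacRel k Q (∑ i : Fin m, ι k (PGen.v (Q := Q) i)) 1
  | target_arrow (e : Q.E) :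
      JacRel k Q (ι k (PGen.v (Q.t e)) * ι k (PGen.a e)) (ι k (PGen.a e))
  | arrow_source (e : Q.E) :
      JacRel k Q (ι k (PGen.a e) * ι k (PGen.v (Q.s e))) (ι k (PGen.a e))
  | der_zero (e : Q.E) : JacRel k Q (cycDer k Q e) 0

/-- the Jacobian algebra of the quiver with potential `(Q̃, W̃)` -/
def JacAlg (k : Type) [Field k] {m : ℕ} (Q : QuiverData m) : Type :=
  RingQuot (JacRel k Q)

noncomputable instance (k : Type) [Field k] {m : ℕ} (Q : QuiverData m) :
    Ring (JacAlg k Q) := by unfold JacAlg; infer_instance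

noncomputable instance (k : Type) [Field k] {m : ℕ} (Q : QuiverData m) :
    Algebra k (JacAlg k Q) := by unfold JacAlg; infer_instance

section Aux

namespace QuiverData

variable {m : ℕ} {Q : QuiverData m}

lemma CycTriple.shift {e f g : Q.E} (h : Q.CycTriple e f g) : Q.CycTriple f g e :=
  ⟨h.2.1, h.2.2.1, h.1, h.2.2.2.2.1, h.2.2.2.2.2, h.2.2.2.1⟩

lemma CycTriple.not_loop {e f g : Q.E} (h : Q.CycTriple e f g) : ¬ Q.IsLoop e := by
  intro hl
  exact h.2.2.2.1 (hl.trans h.1)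

/-- an arrow lies on at most one oriented 3-cycle -/
lemma cyc_unique {c : Fin m} {φ : Q.E} (h : Q.IsTilde c φ) {g e f e' f' : Q.E}
    (h1 : Q.CycTriple g e f) (h2 : Q.CycTriple g e' f') : e = e' ∧ f = f' := by
  have key : e = e' := by
    by_contra hee
    have hse : Q.s e = Q.s e' := h1.1.symm.trans h2.1
    have hte : Q.t e ≠ Q.t e' := fun hh => hee (h.no_mult e e' hse hh)
    set a := Q.s g with ha
    set b := Q.t g with hb
    set x := Q.t e with hx
    set y := Q.t e' with hy
    have hxf : x = Q.s f := h1.2.1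
    have hyf : y = Q.s f' := h2.2.1
    have hab : a ≠ b := fun hh => (h1.2.2.2.1) (hh.trans h1.1)
    have hax : a ≠ x := fun hh => h1.2.2.2.2.2 ((hxf ▸ hh).symm)
    have hay : a ≠ y := fun hh => h2.2.2.2.2.2 ((hyf ▸ hh).symm)
    have hbx : b ≠ x := fun hh => h1.2.2.2.2.1 ((h1.1.symm.trans hh).trans hxf)
    have hby : b ≠ y := fun hh => h2.2.2.2.2.1 ((h2.1.symm.trans hh).trans hyf)
    have adj_ab : Q.graph.Adj a b := ⟨hab, g, Or.inl ⟨rfl, rfl⟩⟩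
    have adj_bx : Q.graph.Adj b x := ⟨hbx, e, Or.inl ⟨h1.1.symm, rfl⟩⟩
    have adj_by : Q.graph.Adj b y := ⟨hby, e', Or.inl ⟨h2.1.symm, rfl⟩⟩
    have adj_xa : Q.graph.Adj x a := ⟨(Ne.symm hax), f, Or.inl ⟨hxf.symm, h1.2.2.1⟩⟩
    have adj_ya : Q.graph.Adj y a := ⟨(Ne.symm hay), f', Or.inl ⟨hyf.symm, h2.2.2.1⟩⟩
    let W : Q.graph.Walk x x :=
      .cons (adj_bx.symm) (.cons adj_by (.cons adj_ya (.cons (adj_xa.symm) .nil)))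
    have hWc : W.IsCycle := by
      rw [SimpleGraph.Walk.isCycle_def]
      refine ⟨?_, by simp [W], ?_⟩
      · rw [SimpleGraph.Walk.isTrail_def]
        simp only [W, SimpleGraph.Walk.edges_cons, SimpleGraph.Walk.edges_nil,
          List.nodup_cons, List.mem_cons, List.mem_singleton, List.not_mem_nil,
          List.nodup_nil, and_true, Sym2.eq, Sym2.rel_iff', Prod.mk.injEq, Prod.swap_prod_mk]
        have hba := hab.symm; have hxa := hax.symm; have hya := hay.symm
        have hxb := hbx.symm; have hyb := hby.symm; have hyx := hte.symm
        tauto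
      · simp only [W, SimpleGraph.Walk.support_cons, SimpleGraph.Walk.support_nil,
          List.tail_cons, List.nodup_cons, List.mem_cons, List.mem_singleton,
          List.not_mem_nil, List.nodup_nil, and_true, not_or]
        have hba := hab.symm; have hxa := hax.symm; have hya := hay.symm
        have hxb := hbx.symm; have hyb := hby.symm; have hyx := hte.symm
        tauto
    have := h.cycles_length_three x W hWc
    simp [W] at this
  refine ⟨key, ?_⟩
  subst key
  exact h.no_mult f f' (h1.2.1.symm.trans h2.2.1) (h1.2.2.1.trans h2.2.2.1.symm)

end QuiverData

lemma cycDer_loop (k : Type) [Field k] {m : ℕ} (Q : QuiverData m) {e : Q.E}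
    (hl : Q.IsLoop e) :
    cycDer k Q e = (3 : k) • (ι k (PGen.a e) * ι k (PGen.a e)) := by
  unfold cycDer
  rw [if_pos hl]
  have hempty : (Finset.univ.filter (fun p : Q.E × Q.E => Q.CycTriple e p.1 p.2)) = ∅ := by
    apply Finset.filter_eq_empty_iff.mpr
    intro p _ hc
    exact hc.not_loop hl
  rw [hempty, Finset.sum_empty, add_zero]

lemma cycDer_cyc (k : Type) [Field k] {m : ℕ} {Q : QuiverData m} {c : Fin (m)} {φ : Q.E}
    (h : Q.IsTilde c φ) {g e f : Q.E} (hc : Q.CycTriple g e f) :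
    cycDer k Q g = ι k (PGen.a f) * ι k (PGen.a e) := by
  unfold cycDer
  rw [if_neg hc.not_loop, zero_add]
  have hsing : (Finset.univ.filter (fun p : Q.E × Q.E => Q.CycTriple g p.1 p.2)) = {(e, f)} := by
    ext p
    simp only [Finset.mem_filter, Finset.mem_univ, true_and, Finset.mem_singleton]
    constructor
    · intro hp
      obtain ⟨h1, h2⟩ := QuiverData.cyc_unique h hp hc
      exact Prod.ext h1 h2
    · rintro rfl
      exact hc
  rw [hsing, Finset.sum_singleton]

end Aux
set_option maxHeartbeats 1000000 in
/-- If `char k ≠ 3`, the endomorphism algebra `A = kQ̃/I_{Q̃}` of a maximal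
rigid object of the cluster tube `C_n` is isomorphic to the Jacobian algebra of
the quiver with potential `(Q̃, W̃)`, where `W̃` is the sum of the cube of the
unique loop and all oriented 3-cycles of `Q̃`. -/
theorem pathAlg_iso_jacobian (k : Type) [Field k] (hchar : (3 : k) ≠ 0)
    (n : ℕ) (hn : 2 ≤ n) (Q : QuiverData (n - 1)) (c : Fin (n - 1)) (φ : Q.E)
    (h : Q.IsTilde c φ) :
    Nonempty (PathAlg k Q ≃ₐ[k] JacAlg k Q) := by
  let mkP : FreeAlgebra k (PGen Q) →ₐ[k] PathAlg k Q := RingQuot.mkAlgHom k (PathRel k Q)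
  let mkJ : FreeAlgebra k (PGen Q) →ₐ[k] JacAlg k Q := RingQuot.mkAlgHom k (JacRel k Q)
  have hPJ : ∀ ⦃x y⦄, PathRel k Q x y → mkJ x = mkJ y := by
    intro x y r
    cases r with
    | vertex_mul i j => exact RingQuot.mkAlgHom_rel k (JacRel.vertex_mul i j)
    | vertex_sum => exact RingQuot.mkAlgHom_rel k JacRel.vertex_sum
    | target_arrow e => exact RingQuot.mkAlgHom_rel k (JacRel.target_arrow e)
    | arrow_source e => exact RingQuot.mkAlgHom_rel k (JacRel.arrow_source e)
    | rel_zero e f hb =>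
      rcases hb with ⟨hl, rfl⟩ | ⟨g, hc⟩
      · have h3 : mkJ (cycDer k Q e) = 0 :=
          (RingQuot.mkAlgHom_rel k (JacRel.der_zero (Q := Q) e)).trans (map_zero _)
        rw [cycDer_loop k Q hl, map_smul] at h3
        have h4 := congrArg (fun t => (3 : k)⁻¹ • t) h3
        simp only [smul_smul, inv_mul_cancel₀ hchar, one_smul, smul_zero] at h4
        rw [map_zero]
        exact h4
      · have hc' : Q.CycTriple g e f := hc.shift.shift
        have h3 : mkJ (cycDer k Q g) = 0 :=
          (RingQuot.mkAlgHom_rel k (JacRel.der_zero (Q := Q) g)).trans (map_zero _)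
        rw [cycDer_cyc k h hc'] at h3
        rw [map_zero]
        exact h3
  have hJP : ∀ ⦃x y⦄, JacRel k Q x y → mkP x = mkP y := by
    intro x y r
    cases r with
    | vertex_mul i j => exact RingQuot.mkAlgHom_rel k (PathRel.vertex_mul i j)
    | vertex_sum => exact RingQuot.mkAlgHom_rel k PathRel.vertex_sum
    | target_arrow e => exact RingQuot.mkAlgHom_rel k (PathRel.target_arrow e)
    | arrow_source e => exact RingQuot.mkAlgHom_rel k (PathRel.arrow_source e)
    | der_zero e =>
      have hsum : mkP (∑ p ∈ Finset.univ.filter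
          (fun p : Q.E × Q.E => Q.CycTriple e p.1 p.2),
          ι k (PGen.a p.2) * ι k (PGen.a p.1)) = 0 := by
        rw [map_sum]
        apply Finset.sum_eq_zero
        intro p hp
        rw [Finset.mem_filter] at hp
        have hb : Q.Bad p.1 p.2 := Or.inr ⟨e, hp.2.shift⟩
        exact (RingQuot.mkAlgHom_rel k (PathRel.rel_zero p.1 p.2 hb)).trans (map_zero _)
      rw [map_zero]
      by_cases hl : Q.IsLoop e
      · have hz : mkP (ι k (PGen.a e) * ι k (PGen.a e)) = 0 :=
          (RingQuot.mkAlgHom_rel k (PathRel.rel_zero e e (Or.inl ⟨hl, rfl⟩))).trans (map_zero _)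
        simp only [cycDer, if_pos hl, map_add, map_smul, hsum, hz, smul_zero, add_zero]
      · simp only [cycDer, if_neg hl, zero_add, hsum]
  let F : PathAlg k Q →ₐ[k] JacAlg k Q := RingQuot.liftAlgHom k ⟨mkJ, hPJ⟩
  let G : JacAlg k Q →ₐ[k] PathAlg k Q := RingQuot.liftAlgHom k ⟨mkP, hJP⟩
  have hFG : F.comp G = AlgHom.id k (JacAlg k Q) := by
    apply RingQuot.ringQuot_ext'
    apply FreeAlgebra.hom_ext
    funext x
    show F (G (RingQuot.mkAlgHom k (JacRel k Q) (ι k x))) = RingQuot.mkAlgHom k (JacRel k Q) (ι k x)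
    rw [show G (RingQuot.mkAlgHom k (JacRel k Q) (ι k x)) = mkP (ι k x) from
      RingQuot.liftAlgHom_mkAlgHom_apply k mkP hJP (ι k x)]
    exact RingQuot.liftAlgHom_mkAlgHom_apply k mkJ hPJ (ι k x)
  have hGF : G.comp F = AlgHom.id k (PathAlg k Q) := by
    apply RingQuot.ringQuot_ext'
    apply FreeAlgebra.hom_ext
    funext x
    show G (F (RingQuot.mkAlgHom k (PathRel k Q) (ι k x))) = RingQuot.mkAlgHom k (PathRel k Q) (ι k x)
    rw [show F (RingQuot.mkAlgHom k (PathRel k Q) (ι k x)) = mkJ (ι k x) from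
      RingQuot.liftAlgHom_mkAlgHom_apply k mkJ hPJ (ι k x)]
    exact RingQuot.liftAlgHom_mkAlgHom_apply k mkP hJP (ι k x)
  exact ⟨AlgEquiv.ofAlgHom F G hFG hGF⟩
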